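/- Let m ≥ 2 be an even integer. Let A be the m×m matrix with A_{ij} = 1 for i < j, A_{ij} = −1 for i > j, and A_{ii} = 0, and let B be the m×m matrix with B_{ij} = (−1)^{i+j} for i < j, B_{ij} = −(−1)^{i+j} for i > j, and B_{ii} = 0. Then A·B is the identity matrix; in particular A is invertible with A^{-1} = B. -/

import Mathlib

open Finset

private lemma sum_Ico_neg_one_pow (x y : ℕ) (hxy : x ≤ y) :
    ∑ k ∈ Finset.Ico x y, ((-1:ℝ))^k =
      (if Even y then (0:ℝ) else 1) - (if Even x then 0 else 1) := by
  rw [Finset.sum_Ico_eq_sub _ hxy, neg_one_geom_sum, neg_one_geom_sum]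

private lemma helper_sum (m a b : ℕ) (hab : a < b) (hb : b < m) (hme : Even m) (c : ℝ)
    (f : ℕ → ℝ)
    (h1 : ∀ k, k < a → f k = -(c * (-1)^k))
    (h2 : f a = 0)
    (h3 : ∀ k, a < k → k < b → f k = c * (-1)^k)
    (h4 : f b = 0)
    (h5 : ∀ k, b < k → f k = -(c * (-1)^k)) :
    ∑ k ∈ Finset.range m, f k = 0 := by
  have hab1 : a + 1 ≤ b := hab
  have hbm : b + 1 ≤ m := hb
  rw [Finset.range_eq_Ico,
    ← Finset.sum_Ico_consecutive f (Nat.zero_le (b+1)) hbm,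
    ← Finset.sum_Ico_consecutive f (Nat.zero_le (a+1)) (by omega : a+1 ≤ b+1),
    Finset.sum_Ico_succ_top (Nat.zero_le a) f,
    Finset.sum_Ico_succ_top hab1 f, h2, h4]
  have e1 : ∑ k ∈ Finset.Ico 0 a, f k = -c * ∑ k ∈ Finset.Ico 0 a, (-1:ℝ)^k := by
    rw [Finset.mul_sum]
    exact Finset.sum_congr rfl fun k hk => by
      rw [h1 k (Finset.mem_Ico.mp hk).2]; ring
  have e2 : ∑ k ∈ Finset.Ico (a+1) b, f k = c * ∑ k ∈ Finset.Ico (a+1) b, (-1:ℝ)^k := by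
    rw [Finset.mul_sum]
    exact Finset.sum_congr rfl fun k hk =>
      h3 k (Finset.mem_Ico.mp hk).1 (Finset.mem_Ico.mp hk).2
  have e3 : ∑ k ∈ Finset.Ico (b+1) m, f k = -c * ∑ k ∈ Finset.Ico (b+1) m, (-1:ℝ)^k := by
    rw [Finset.mul_sum]
    exact Finset.sum_congr rfl fun k hk => by
      rw [h5 k (Finset.mem_Ico.mp hk).1]; ring
  rw [e1, e2, e3, sum_Ico_neg_one_pow 0 a (Nat.zero_le a),
    sum_Ico_neg_one_pow (a+1) b hab1, sum_Ico_neg_one_pow (b+1) m hbm]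
  rcases Nat.even_or_odd a with ha | ha <;> rcases Nat.even_or_odd b with hbp | hbp <;>
    simp [ha, hbp, hme, Nat.even_add_one, Nat.not_even_iff_odd.mpr, parity_simps] <;> ring

private lemma key_sum (m i j : ℕ) (hme : Even m) (hi : i < m) (hj : j < m) :
    ∑ k ∈ Finset.range m,
      ((if i < k then (1:ℝ) else if k < i then -1 else 0) *
       (if k < j then (-1:ℝ)^(k+j) else if j < k then -((-1:ℝ)^(k+j)) else 0))
    = if i = j then 1 else 0 := by
  set f : ℕ → ℝ := fun k =>
    (if i < k then (1:ℝ) else if k < i then -1 else 0) *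
      (if k < j then (-1:ℝ)^(k+j) else if j < k then -((-1:ℝ)^(k+j)) else 0) with hf
  rcases lt_trichotomy i j with h | h | h
  · rw [if_neg (Nat.ne_of_lt h)]
    refine helper_sum m i j h hj hme ((-1)^j) f ?_ ?_ ?_ ?_ ?_
    · intro k hk
      have hkj : k < j := hk.trans h
      simp only [hf, if_neg (by omega : ¬ i < k), if_pos hk, if_pos hkj, pow_add]
      ring
    · simp only [hf, lt_irrefl, if_neg (lt_irrefl i)]
      simp
    · intro k hik hkj
      simp only [hf, if_pos hik, if_pos hkj, pow_add]
      ring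
    · simp only [hf, lt_irrefl]
      simp
    · intro k hk
      simp only [hf, if_pos (h.trans hk), if_neg (by omega : ¬ k < j), if_pos hk, pow_add]
      ring
  · subst h
    rw [if_pos rfl]
    have hpt : ∀ k ∈ Finset.range m,
        f k = -((-1:ℝ)^i * (-1)^k) + (if k = i then 1 else 0) := by
      intro k _
      rcases lt_trichotomy k i with hk | hk | hk
      · simp only [hf, if_neg (by omega : ¬ i < k), if_pos hk, if_pos hk,
          if_neg (by omega : ¬ k = i), pow_add]
        ring
      · subst hk
        simp only [hf, lt_irrefl, if_neg (lt_irrefl k), if_pos rfl]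
        have : ((-1:ℝ))^k * (-1)^k = 1 := by
          rw [← pow_add]
          exact Even.neg_one_pow ⟨k, rfl⟩
        simp [this]
      · simp only [hf, if_pos hk, if_neg (by omega : ¬ k < i), if_pos hk,
          if_neg (by omega : ¬ k = i), pow_add]
        ring
    rw [Finset.sum_congr rfl hpt, Finset.sum_add_distrib]
    have hz : ∑ k ∈ Finset.range m, -((-1:ℝ)^i * (-1)^k) = 0 := by
      have : ∑ k ∈ Finset.range m, ((-1:ℝ))^k = 0 := by
        rw [neg_one_geom_sum, if_pos hme]
      calc ∑ k ∈ Finset.range m, -((-1:ℝ)^i * (-1)^k)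
          = -((-1:ℝ)^i * ∑ k ∈ Finset.range m, (-1:ℝ)^k) := by
            rw [Finset.mul_sum, ← Finset.sum_neg_distrib]
        _ = 0 := by rw [this]; ring
    rw [hz, zero_add]
    simp [Finset.sum_ite_eq', Finset.mem_range.mpr hi]
  · rw [if_neg (by omega : ¬ i = j)]
    refine helper_sum m j i h hi hme ((-1)^j) f ?_ ?_ ?_ ?_ ?_
    · intro k hk
      simp only [hf, if_neg (by omega : ¬ i < k), if_pos (hk.trans h), if_pos hk, pow_add]
      ring
    · simp only [hf, lt_irrefl, if_neg (lt_irrefl j)]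
      simp
    · intro k hjk hki
      simp only [hf, if_neg (by omega : ¬ i < k), if_pos hki,
        if_neg (by omega : ¬ k < j), if_pos hjk, pow_add]
      ring
    · simp only [hf, lt_irrefl, if_neg (lt_irrefl i)]
      simp
    · intro k hk
      simp only [hf, if_pos hk, if_neg (by omega : ¬ k < j), if_pos (h.trans hk), pow_add]
      ring

/-- For even `m`, the Poisson matrix `A` of the coordinates `log ξ_i`
(`A_{ij} = 1` for `i < j`) is inverted by `B_{ij} = (-1)^{i+j}` for `i < j`
(extended skew-symmetrically). -/
theorem stmt_4 (m : ℕ) (hm : 2 ≤ m) (hme : Even m)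
    (A B : Matrix (Fin m) (Fin m) ℝ)
    (hA : ∀ i j : Fin m, A i j =
      if (i : ℕ) < (j : ℕ) then 1 else if (j : ℕ) < (i : ℕ) then -1 else 0)
    (hB : ∀ i j : Fin m, B i j =
      if (i : ℕ) < (j : ℕ) then (-1 : ℝ) ^ ((i : ℕ) + (j : ℕ))
      else if (j : ℕ) < (i : ℕ) then -((-1 : ℝ) ^ ((i : ℕ) + (j : ℕ)))
      else 0) :
    A * B = 1 ∧ IsUnit A ∧ A⁻¹ = B := by
  have hAB : A * B = 1 := by
    ext i j
    rw [Matrix.mul_apply]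
    have hpt : ∀ k : Fin m, A i k * B k j =
        (fun k : ℕ =>
          (if (i:ℕ) < k then (1:ℝ) else if k < (i:ℕ) then -1 else 0) *
          (if k < (j:ℕ) then (-1:ℝ)^(k+(j:ℕ)) else if (j:ℕ) < k then -((-1:ℝ)^(k+(j:ℕ))) else 0))
          (k : ℕ) := fun k => by rw [hA, hB]
    rw [Finset.sum_congr rfl (fun k _ => hpt k),
      Fin.sum_univ_eq_sum_range (fun k : ℕ =>
        (if (i:ℕ) < k then (1:ℝ) else if k < (i:ℕ) then -1 else 0) *
        (if k < (j:ℕ) then (-1:ℝ)^(k+(j:ℕ)) else if (j:ℕ) < k then -((-1:ℝ)^(k+(j:ℕ))) else 0)) m,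
      key_sum m i j hme i.isLt j.isLt, Matrix.one_apply]
    by_cases hij : i = j
    · simp [hij]
    · rw [if_neg (fun hc => hij (Fin.val_injective hc)), if_neg hij]
  refine ⟨hAB, ?_, Matrix.inv_eq_right_inv hAB⟩
  have hdet : IsUnit A.det := by
    have h := congrArg Matrix.det hAB
    rw [Matrix.det_mul, Matrix.det_one] at h
    exact IsUnit.of_mul_eq_one _ h
  exact (Matrix.isUnit_iff_isUnit_det A).mpr hdet
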